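/- Let m, n ≥ 3. The disjoint union of cycles C_m and C_n is the niche graph of some bipartite tournament with bipartition (V(C_m), V(C_n)) if and only if (m,n) ∈ {(3,3), (3,4), (4,3), (4,4)}. -/

import Mathlib

structure BipTournament (α : Type*) where
  U : Set α
  V : Set α
  A : α → α → Prop
  disj : Disjoint U V
  cover : U ∪ V = Set.univ
  orient : ∀ u ∈ U, ∀ v ∈ V, Xor' (A u v) (A v u)
  arcs : ∀ x y, A x y → (x ∈ U ∧ y ∈ V) ∨ (x ∈ V ∧ y ∈ U)

def BipTournament.outN {α : Type*} (D : BipTournament α) (x : α) : Set α := {y | D.A x y}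

def BipTournament.inN {α : Type*} (D : BipTournament α) (x : α) : Set α := {y | D.A y x}

def BipTournament.niche {α : Type*} (D : BipTournament α) : SimpleGraph α where
  Adj x y := x ≠ y ∧ ((∃ w, D.A x w ∧ D.A y w) ∨ (∃ w, D.A w x ∧ D.A w y))
  symm := by
    refine ⟨?_⟩
    rintro x y ⟨h, h'⟩
    exact ⟨h.symm, h'.imp (fun ⟨w, a, b⟩ => ⟨w, b, a⟩) (fun ⟨w, a, b⟩ => ⟨w, b, a⟩)⟩
  loopless := ⟨fun x h => h.1 rfl⟩

/-! ### Auxiliary lemmas -/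

lemma succMod {m x y : ℕ} (hx : x < m) (h : (x+1) % m = y) :
    x + 1 = y ∨ (y = 0 ∧ x + 1 = m) := by
  rcases Nat.lt_or_ge (x+1) m with h' | h'
  · left; rwa [Nat.mod_eq_of_lt h'] at h
  · right
    have hxm : x + 1 = m := by omega
    subst hxm
    simp [Nat.mod_self] at h
    omega

lemma three_of_card {β : Type*} [DecidableEq β] {s : Finset β} (h : 3 ≤ s.card) :
    ∃ a b c, a ∈ s ∧ b ∈ s ∧ c ∈ s ∧ a ≠ b ∧ a ≠ c ∧ b ≠ c := by
  obtain ⟨a, ha⟩ := (Finset.card_pos (s := s)).mp (by omega)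
  have h2 : 0 < (s.erase a).card := by
    rw [Finset.card_erase_of_mem ha]; omega
  obtain ⟨b, hb⟩ := (Finset.card_pos (s := s.erase a)).mp h2
  have h3 : 0 < ((s.erase a).erase b).card := by
    rw [Finset.card_erase_of_mem hb, Finset.card_erase_of_mem ha]; omega
  obtain ⟨c, hc⟩ := (Finset.card_pos (s := (s.erase a).erase b)).mp h3
  refine ⟨a, b, c, ha, Finset.mem_of_mem_erase hb,
    Finset.mem_of_mem_erase (Finset.mem_of_mem_erase hc), ?_, ?_, ?_⟩
  · exact fun e => (Finset.mem_erase.mp hb).1 e.symm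
  · exact fun e => (Finset.mem_erase.mp (Finset.mem_of_mem_erase hc)).1 e.symm
  · exact fun e => (Finset.mem_erase.mp hc).1 e.symm

lemma same_side_adj {α : Type*} (D : BipTournament α) {c x y : α}
    (hx : D.A x c ∨ D.A c x) (hy : D.A y c ∨ D.A c y)
    (hne : x ≠ y) (hsame : D.A x c ↔ D.A y c) : D.niche.Adj x y := by
  by_cases h : D.A x c
  · exact ⟨hne, Or.inl ⟨c, h, hsame.mp h⟩⟩
  · have hx' : D.A c x := hx.resolve_left h
    have hy' : D.A c y := hy.resolve_left (fun h' => h (hsame.mpr h'))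
    exact ⟨hne, Or.inr ⟨c, hx', hy'⟩⟩

/-! ### Explicit constructions -/

def arrow {m n : ℕ} (M : Fin m → Fin n → Bool) :
    Fin m ⊕ Fin n → Fin m ⊕ Fin n → Bool :=
  fun x y => Sum.elim (fun u => Sum.elim (fun _ => false) (fun v => M u v) y)
    (fun v => Sum.elim (fun u => !(M u v)) (fun _ => false) y) x

def mkBT {m n : ℕ} (M : Fin m → Fin n → Bool) : BipTournament (Fin m ⊕ Fin n) where
  U := Set.range Sum.inl
  V := Set.range Sum.inr
  A x y := arrow M x y = true
  disj := by
    rw [Set.disjoint_left]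
    rintro x ⟨u, rfl⟩ ⟨v, h⟩
    simp at h
  cover := by ext x; cases x <;> simp
  orient := by
    rintro _ ⟨u, rfl⟩ _ ⟨v, rfl⟩
    simp only [arrow, Xor']
    generalize M u v = b
    cases b <;> simp [Xor]
  arcs := by
    rintro (u | v) (u' | v') h <;> simp [arrow] at h ⊢

theorem stmt17 (m n : ℕ) (hm : 3 ≤ m) (hn : 3 ≤ n) :
    (∃ D : BipTournament (Fin m ⊕ Fin n),
      D.U = Set.range Sum.inl ∧ D.V = Set.range Sum.inr ∧
      D.niche = SimpleGraph.fromRel (fun x y =>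
        match x, y with
        | Sum.inl a, Sum.inl b => (a.val + 1) % m = b.val
        | Sum.inr a, Sum.inr b => (a.val + 1) % n = b.val
        | _, _ => False)) ↔ ((m = 3 ∨ m = 4) ∧ (n = 3 ∨ n = 4)) := by
  classical
  constructor
  · rintro ⟨D, hU, hV, hG⟩
    constructor
    · -- bound m
      by_contra hc
      push_neg at hc
      have h5 : 5 ≤ m := by omega
      set v : Fin m ⊕ Fin n := Sum.inr ⟨0, by omega⟩ with hv
      have hvV : v ∈ D.V := by rw [hV]; exact ⟨_, rfl⟩
      have hor : ∀ i : Fin m, D.A (Sum.inl i) v ∨ D.A v (Sum.inl i) := by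
        intro i
        have huU : (Sum.inl i : Fin m ⊕ Fin n) ∈ D.U := by rw [hU]; exact ⟨i, rfl⟩
        rcases D.orient _ huU v hvV with h | h
        · exact Or.inl h.1
        · exact Or.inr h.1
      set f : Fin m → Bool := fun i => decide (D.A (Sum.inl i) v) with hf
      have hpig : ∃ b ∈ (Finset.univ : Finset Bool),
          2 < (Finset.univ.filter fun i : Fin m => f i = b).card := by
        apply Finset.exists_lt_card_fiber_of_mul_lt_card_of_maps_to
          (fun a _ => Finset.mem_univ (f a))
        simp only [Finset.card_univ, Fintype.card_bool, Fintype.card_fin]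
        omega
      obtain ⟨bl, -, hbl⟩ := hpig
      obtain ⟨i, j, k, hi, hj, hk, hij, hik, hjk⟩ :=
        three_of_card (s := Finset.univ.filter fun i : Fin m => f i = bl) (by omega)
      have hfi := (Finset.mem_filter.mp hi).2
      have hfj := (Finset.mem_filter.mp hj).2
      have hfk := (Finset.mem_filter.mp hk).2
      have key : ∀ a b : Fin m, a ≠ b → f a = f b →
          ((a : ℕ) + 1 = b ∨ ((b : ℕ) = 0 ∧ (a : ℕ) + 1 = m)) ∨
          ((b : ℕ) + 1 = a ∨ ((a : ℕ) = 0 ∧ (b : ℕ) + 1 = m)) := by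
        intro a b hab hfab
        have hsame : D.A (Sum.inl a) v ↔ D.A (Sum.inl b) v := decide_eq_decide.mp hfab
        have hadj : D.niche.Adj (Sum.inl a) (Sum.inl b) :=
          same_side_adj D (hor a) (hor b) (by simp [hab]) hsame
        rw [hG] at hadj
        rw [SimpleGraph.fromRel_adj] at hadj
        rcases hadj.2 with h | h
        · exact Or.inl (succMod a.isLt h)
        · exact Or.inr (succMod b.isLt h)
      have k1 := key i j hij (hfi.trans hfj.symm)
      have k2 := key i k hik (hfi.trans hfk.symm)
      have k3 := key j k hjk (hfj.trans hfk.symm)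
      have hij' : (i : ℕ) ≠ j := fun e => hij (Fin.ext e)
      have hik' : (i : ℕ) ≠ k := fun e => hik (Fin.ext e)
      have hjk' : (j : ℕ) ≠ k := fun e => hjk (Fin.ext e)
      have := i.isLt; have := j.isLt; have := k.isLt
      omega
    · -- bound n
      by_contra hc
      push_neg at hc
      have h5 : 5 ≤ n := by omega
      set v : Fin m ⊕ Fin n := Sum.inl ⟨0, by omega⟩ with hv
      have hvU : v ∈ D.U := by rw [hU]; exact ⟨_, rfl⟩
      have hor : ∀ i : Fin n, D.A (Sum.inr i) v ∨ D.A v (Sum.inr i) := by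
        intro i
        have huV : (Sum.inr i : Fin m ⊕ Fin n) ∈ D.V := by rw [hV]; exact ⟨i, rfl⟩
        rcases D.orient v hvU _ huV with h | h
        · exact Or.inr h.1
        · exact Or.inl h.1
      set f : Fin n → Bool := fun i => decide (D.A (Sum.inr i) v) with hf
      have hpig : ∃ b ∈ (Finset.univ : Finset Bool),
          2 < (Finset.univ.filter fun i : Fin n => f i = b).card := by
        apply Finset.exists_lt_card_fiber_of_mul_lt_card_of_maps_to
          (fun a _ => Finset.mem_univ (f a))
        simp only [Finset.card_univ, Fintype.card_bool, Fintype.card_fin]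
        omega
      obtain ⟨bl, -, hbl⟩ := hpig
      obtain ⟨i, j, k, hi, hj, hk, hij, hik, hjk⟩ :=
        three_of_card (s := Finset.univ.filter fun i : Fin n => f i = bl) (by omega)
      have hfi := (Finset.mem_filter.mp hi).2
      have hfj := (Finset.mem_filter.mp hj).2
      have hfk := (Finset.mem_filter.mp hk).2
      have key : ∀ a b : Fin n, a ≠ b → f a = f b →
          ((a : ℕ) + 1 = b ∨ ((b : ℕ) = 0 ∧ (a : ℕ) + 1 = n)) ∨
          ((b : ℕ) + 1 = a ∨ ((a : ℕ) = 0 ∧ (b : ℕ) + 1 = n)) := by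
        intro a b hab hfab
        have hsame : D.A (Sum.inr a) v ↔ D.A (Sum.inr b) v := decide_eq_decide.mp hfab
        have hadj : D.niche.Adj (Sum.inr a) (Sum.inr b) :=
          same_side_adj D (hor a) (hor b) (by simp [hab]) hsame
        rw [hG] at hadj
        rw [SimpleGraph.fromRel_adj] at hadj
        rcases hadj.2 with h | h
        · exact Or.inl (succMod a.isLt h)
        · exact Or.inr (succMod b.isLt h)
      have k1 := key i j hij (hfi.trans hfj.symm)
      have k2 := key i k hik (hfi.trans hfk.symm)
      have k3 := key j k hjk (hfj.trans hfk.symm)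
      have hij' : (i : ℕ) ≠ j := fun e => hij (Fin.ext e)
      have hik' : (i : ℕ) ≠ k := fun e => hik (Fin.ext e)
      have hjk' : (j : ℕ) ≠ k := fun e => hjk (Fin.ext e)
      have := i.isLt; have := j.isLt; have := k.isLt
      omega
  · rintro ⟨(rfl | rfl), (rfl | rfl)⟩
    · refine ⟨mkBT (fun (_ : Fin 3) (_ : Fin 3) => false), rfl, rfl, ?_⟩
      ext x y
      simp only [BipTournament.niche, mkBT, SimpleGraph.fromRel_adj]
      constructor
      · rintro ⟨hne, h⟩
        refine ⟨hne, ?_⟩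
        revert h; revert hne
        fin_cases x <;> fin_cases y <;> decide
      · rintro ⟨hne, h⟩
        refine ⟨hne, ?_⟩
        revert h; revert hne
        fin_cases x <;> fin_cases y <;> decide
    · refine ⟨mkBT (![![false,false,true,true], ![false,false,true,true],
          ![false,true,true,false]] : Fin 3 → Fin 4 → Bool), rfl, rfl, ?_⟩
      ext x y
      simp only [BipTournament.niche, mkBT, SimpleGraph.fromRel_adj]
      constructor
      · rintro ⟨hne, h⟩
        refine ⟨hne, ?_⟩
        revert h; revert hne
        fin_cases x <;> fin_cases y <;> decide
      · rintro ⟨hne, h⟩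
        refine ⟨hne, ?_⟩
        revert h; revert hne
        fin_cases x <;> fin_cases y <;> decide
    · refine ⟨mkBT (![![false,false,false], ![false,false,true],
          ![true,true,true], ![true,true,false]] : Fin 4 → Fin 3 → Bool), rfl, rfl, ?_⟩
      ext x y
      simp only [BipTournament.niche, mkBT, SimpleGraph.fromRel_adj]
      constructor
      · rintro ⟨hne, h⟩
        refine ⟨hne, ?_⟩
        revert h; revert hne
        fin_cases x <;> fin_cases y <;> decide
      · rintro ⟨hne, h⟩
        refine ⟨hne, ?_⟩
        revert h; revert hne
        fin_cases x <;> fin_cases y <;> decide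
    · refine ⟨mkBT (![![false,false,true,true], ![false,true,true,false],
          ![true,true,false,false], ![true,false,false,true]] : Fin 4 → Fin 4 → Bool),
          rfl, rfl, ?_⟩
      ext x y
      simp only [BipTournament.niche, mkBT, SimpleGraph.fromRel_adj]
      constructor
      · rintro ⟨hne, h⟩
        refine ⟨hne, ?_⟩
        revert h; revert hne
        fin_cases x <;> fin_cases y <;> decide
      · rintro ⟨hne, h⟩
        refine ⟨hne, ?_⟩
        revert h; revert hne
        fin_cases x <;> fin_cases y <;> decide
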